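/- arXiv:1204.4641 — 5 statements merged into one kernel-verified Lean document; each statement's English description precedes it below -/
import Mathlib

section
/- Let G be a group with a subset X and a normal abelian subgroup N such that G is generated by N together with X. Then the commutator subgroup [N,G] equals the product of the subgroups [N,x] over all x in X. -/
open scoped commutatorElement

/-- Let `G` be a group with a subset `X` and a normal abelian subgroup `N`
such that `G = ⟨N, X⟩`. Then `[N,G] = ∏_{x ∈ X} [N,x]`. -/
theorem commutator_eq_iSup_of_generated
    (G : Type*) [Group G] (X : Set G) (N : Subgroup G)
    [N.Normal] (hab : ∀ a ∈ N, ∀ b ∈ N, a * b = b * a)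
    (hgen : Subgroup.closure ((N : Set G) ∪ X) = ⊤) :
    ⁅N, (⊤ : Subgroup G)⁆ = ⨆ x ∈ X, ⁅N, Subgroup.closure {x}⁆ := by
  set S : Subgroup G := ⨆ x ∈ X, ⁅N, Subgroup.closure {x}⁆ with hS
  have hSN : S ≤ N := by
    refine iSup₂_le fun x _ => ?_
    exact Subgroup.commutator_le_left N (Subgroup.closure {x})
  have hmemS : ∀ x ∈ X, ∀ n ∈ N, ∀ c ∈ Subgroup.closure {x}, ⁅n, c⁆ ∈ S := by
    intro x hx n hn c hc
    exact le_iSup₂ (f := fun x _ => ⁅N, Subgroup.closure {x}⁆) x hx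
      (Subgroup.commutator_mem_commutator hn hc)
  -- normality of S
  have hconj : ∀ g : G, ∀ s ∈ S, g * s * g⁻¹ ∈ S := by
    intro g
    have hg : g ∈ Subgroup.closure ((N : Set G) ∪ X) := hgen ▸ Subgroup.mem_top g
    have : (∀ s ∈ S, g * s * g⁻¹ ∈ S) ∧ (∀ s ∈ S, g⁻¹ * s * g ∈ S) := by
      induction hg using Subgroup.closure_induction with
      | mem y hy =>
        rcases hy with hy | hy
        · constructor <;> intro s hs
          · have h1 : y * s * y⁻¹ = s := by rw [hab y hy s (hSN hs)]; group
            rw [h1]; exact hs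
          · have h1 : y⁻¹ * s * y = s := by rw [mul_assoc, hab s (hSN hs) y hy]; group
            rw [h1]; exact hs
        · constructor <;> intro s hs
          · have h1 : y * s * y⁻¹ = s * ⁅s⁻¹, y⁆ := by group
            rw [h1]
            exact mul_mem hs (hmemS y hy s⁻¹ (inv_mem (hSN hs)) y (Subgroup.subset_closure rfl))
          · have h1 : y⁻¹ * s * y = s * ⁅s⁻¹, y⁻¹⁆ := by group
            rw [h1]
            exact mul_mem hs (hmemS y hy s⁻¹ (inv_mem (hSN hs)) y⁻¹
              (inv_mem (Subgroup.subset_closure rfl)))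
      | one => constructor <;> intro s hs <;> simpa using hs
      | mul a b _ _ iha ihb =>
        constructor <;> intro s hs
        · have : a * b * s * (a * b)⁻¹ = a * (b * s * b⁻¹) * a⁻¹ := by group
          rw [this]; exact iha.1 _ (ihb.1 s hs)
        · have : (a * b)⁻¹ * s * (a * b) = b⁻¹ * (a⁻¹ * s * a) * b := by group
          rw [this]; exact ihb.2 _ (iha.2 s hs)
      | inv a _ iha =>
        constructor <;> intro s hs
        · simpa using iha.2 s hs
        · simpa using iha.1 s hs
    exact this.1
  apply le_antisymm
  · rw [Subgroup.commutator_le]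
    intro n hn g hgt
    clear hgt
    have hg : g ∈ Subgroup.closure ((N : Set G) ∪ X) := hgen ▸ Subgroup.mem_top g
    induction hg using Subgroup.closure_induction with
    | mem y hy =>
      rcases hy with hy | hy
      · have : ⁅n, y⁆ = 1 := by
          rw [commutatorElement_def, hab n hn y hy]; group
        rw [this]; exact one_mem S
      · exact hmemS y hy n hn y (Subgroup.subset_closure rfl)
    | one => simpa using one_mem S
    | mul a b _ _ iha ihb =>
      have : ⁅n, a * b⁆ = ⁅n, a⁆ * (a * ⁅n, b⁆ * a⁻¹) := by group
      rw [this]; exact mul_mem iha (hconj a _ ihb)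
    | inv a _ iha =>
      have : ⁅n, a⁻¹⁆ = a⁻¹ * ⁅n, a⁆⁻¹ * a := by group
      rw [this]; simpa using hconj a⁻¹ ⁅n, a⁆⁻¹ (inv_mem iha)
  · exact iSup₂_le fun x _ => Subgroup.commutator_mono le_rfl le_top
end

section
/- Let G be a group such that the quotient G/Z(G) by its center has finite rank r, and let M be a normal abelian subgroup of G. Then the commutator subgroup [M,G] has rank at most r². -/
open Subgroup
open scoped commutatorElement

section Aux

variable {G : Type*} [Group G]

private lemma mem_closure_finset {s : Set G} {x : G} (hx : x ∈ closure s) :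
    ∃ F : Finset G, ↑F ⊆ s ∧ x ∈ closure (F : Set G) := by
  classical
  induction hx using closure_induction with
  | mem x hxs => exact ⟨{x}, by simpa using hxs, subset_closure (by simp)⟩
  | one => exact ⟨∅, by simp, one_mem _⟩
  | mul x y hx hy ihx ihy =>
      obtain ⟨F₁, h₁, hx₁⟩ := ihx
      obtain ⟨F₂, h₂, hx₂⟩ := ihy
      refine ⟨F₁ ∪ F₂, ?_, mul_mem (closure_mono ?_ hx₁) (closure_mono ?_ hx₂)⟩
      · rw [Finset.coe_union]; exact Set.union_subset h₁ h₂
      · rw [Finset.coe_union]; exact Set.subset_union_left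
      · rw [Finset.coe_union]; exact Set.subset_union_right
  | inv x hx ihx =>
      obtain ⟨F, h, hxF⟩ := ihx
      exact ⟨F, h, inv_mem hxF⟩

private lemma finset_mem_closure_finset {s : Set G} (T : Finset G)
    (h : ∀ t ∈ T, t ∈ closure s) :
    ∃ F : Finset G, ↑F ⊆ s ∧ ∀ t ∈ T, t ∈ closure (F : Set G) := by
  classical
  choose F hF hmem using fun t : T => mem_closure_finset (h t t.2)
  refine ⟨T.attach.biUnion fun t => F t, ?_, fun t ht => ?_⟩
  · intro x hx
    rw [Finset.mem_coe, Finset.mem_biUnion] at hx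
    obtain ⟨t, _, hxF⟩ := hx
    exact hF t hxF
  · exact closure_mono
      (Finset.coe_subset.2 (Finset.subset_biUnion_of_mem F (Finset.mem_attach T ⟨t, ht⟩)))
      (hmem ⟨t, ht⟩)

private lemma comm_aux_mul (m u v : G) :
    ⁅m, u * v⁆ = ⁅m, u⁆ * ⁅m, v⁆ * ⁅⁅m, v⁆⁻¹, u⁆ := by
  simp only [commutatorElement_def]; group

private lemma comm_aux_inv (m u : G) :
    ⁅m, u⁻¹⁆ = ⁅m, u⁆⁻¹ * ⁅u⁻¹ * ⁅m, u⁆ * u⁻¹⁻¹, u⁆⁻¹ := by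
  simp only [commutatorElement_def]; group

private lemma comm_mul_central_right (m w z : G) (hz : z ∈ Subgroup.center G) :
    ⁅m, w * z⁆ = ⁅m, w⁆ := by
  have h0 : m⁻¹ * z = z * m⁻¹ := Subgroup.mem_center_iff.mp hz m⁻¹
  have h : z * m⁻¹ * z⁻¹ = m⁻¹ := by rw [← h0]; group
  calc ⁅m, w * z⁆ = m * w * (z * m⁻¹ * z⁻¹) * w⁻¹ := by
        simp only [commutatorElement_def]; group
    _ = ⁅m, w⁆ := by rw [h]; simp only [commutatorElement_def]

private lemma comm_mul_central_left (b z y : G) (hz : z ∈ Subgroup.center G) :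
    ⁅b * z, y⁆ = ⁅b, y⁆ := by
  have h0 : y * z = z * y := Subgroup.mem_center_iff.mp hz y
  have h : z * y * z⁻¹ = y := by rw [← h0]; group
  calc ⁅b * z, y⁆ = b * (z * y * z⁻¹) * b⁻¹ * y⁻¹ := by
        simp only [commutatorElement_def]; group
    _ = ⁅b, y⁆ := by rw [h]; simp only [commutatorElement_def]

private lemma commutator_mem_of_left {M : Subgroup G} [M.Normal] {m : G} (hm : m ∈ M) (g : G) :
    ⁅m, g⁆ ∈ M := by
  have h : ⁅m, g⁆ = m * (g * m⁻¹ * g⁻¹) := by simp only [commutatorElement_def]; group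
  rw [h]
  exact mul_mem hm (Subgroup.Normal.conj_mem ‹M.Normal› _ (inv_mem hm) g)

private lemma commutator_snd_mem_closure {M : Subgroup G} [M.Normal] (Y : Set G)
    {w : G} (hw : w ∈ closure Y) :
    ∀ m ∈ M, ⁅m, w⁆ ∈ closure {x | ∃ m' ∈ (M : Set G), ∃ y ∈ Y, ⁅m', y⁆ = x} := by
  induction hw using closure_induction with
  | mem y hy => exact fun m hm => subset_closure ⟨m, hm, y, hy, rfl⟩
  | one =>
      intro m hm
      have h : ⁅m, (1 : G)⁆ = 1 := by simp only [commutatorElement_def]; group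
      rw [h]; exact one_mem _
  | mul u v hu hv ihu ihv =>
      intro m hm
      rw [comm_aux_mul m u v]
      exact mul_mem (mul_mem (ihu m hm) (ihv m hm))
        (ihu _ (inv_mem (commutator_mem_of_left hm v)))
  | inv u hu ihu =>
      intro m hm
      rw [comm_aux_inv m u]
      exact mul_mem (inv_mem (ihu m hm))
        (inv_mem (ihu _ (Subgroup.Normal.conj_mem ‹M.Normal› _
          (commutator_mem_of_left hm u) u⁻¹)))

private lemma commutator_fst_mem_closure {M : Subgroup G} [M.Normal] [IsMulCommutative M]
    {B : Set G} (hBM : B ⊆ (M : Set G)) (y : G) {b : G} (hb : b ∈ closure B) :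
    ⁅b, y⁆ ∈ closure {x | ∃ b₀ ∈ B, ⁅b₀, y⁆ = x} := by
  have hBle : closure B ≤ M := (closure_le M).2 hBM
  induction hb using closure_induction with
  | mem b hbB => exact subset_closure ⟨b, hbB, rfl⟩
  | one =>
      have h : ⁅(1 : G), y⁆ = 1 := by simp only [commutatorElement_def]; group
      rw [h]; exact one_mem _
  | mul a b ha hb iha ihb =>
      have haM : a ∈ M := hBle ha
      have hbM : b ∈ M := hBle hb
      have hcomm : a * ⁅b, y⁆ = ⁅b, y⁆ * a :=
        Subgroup.mul_comm_of_mem_isMulCommutative M haM (commutator_mem_of_left hbM y)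
      have key : ⁅a * b, y⁆ = ⁅b, y⁆ * ⁅a, y⁆ := by
        have h1 : ⁅a * b, y⁆ = a * ⁅b, y⁆ * a⁻¹ * ⁅a, y⁆ := by
          simp only [commutatorElement_def]; group
        rw [h1, hcomm]; group
      rw [key]; exact mul_mem ihb iha
  | inv a ha iha =>
      have haM : a ∈ M := hBle ha
      have hcomm : a⁻¹ * ⁅a, y⁆⁻¹ = ⁅a, y⁆⁻¹ * a⁻¹ :=
        Subgroup.mul_comm_of_mem_isMulCommutative M (inv_mem haM)
          (inv_mem (commutator_mem_of_left haM y))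
      have key : ⁅a⁻¹, y⁆ = ⁅a, y⁆⁻¹ := by
        have h1 : ⁅a⁻¹, y⁆ = a⁻¹ * ⁅a, y⁆⁻¹ * a := by
          simp only [commutatorElement_def]; group
        rw [h1, hcomm]; group
      rw [key]; exact inv_mem iha

end Aux

section AbelianRank

private lemma exists_finset_card_le_span {P : Type*} [AddCommGroup P] {n : ℕ} (v : Fin n → P)
    (hv : Submodule.span ℤ (Set.range v) = ⊤) (N : Submodule ℤ P) :
    ∃ S : Finset P, S.card ≤ n ∧ Submodule.span ℤ (S : Set P) = N := by
  classical
  set π : (Fin n → ℤ) →ₗ[ℤ] P := Fintype.linearCombination ℤ v with hπdef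
  have hsurj : Function.Surjective π := by
    rw [← LinearMap.range_eq_top, hπdef, Fintype.range_linearCombination, hv]
  set N' : Submodule ℤ (Fin n → ℤ) := N.comap π with hN'def
  obtain ⟨m, b⟩ := Submodule.basisOfPid (Pi.basisFun ℤ (Fin n)) N'
  have hm : m ≤ n := by
    have h1 : Module.finrank ℤ N' = m := by
      rw [Module.finrank_eq_card_basis b, Fintype.card_fin]
    have h2 : Module.finrank ℤ N' ≤ Module.finrank ℤ (Fin n → ℤ) := N'.finrank_le
    rwa [h1, Module.finrank_fin_fun] at h2
  refine ⟨Finset.image (fun i => π (b i)) Finset.univ, ?_, ?_⟩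
  · exact Finset.card_image_le.trans (by simpa using hm)
  · have hN : Submodule.map π N' = N := Submodule.map_comap_eq_of_surjective hsurj N
    have hb : Submodule.span ℤ (Set.range fun i => ((b i : Fin n → ℤ))) = N' := by
      have h1 : Submodule.map N'.subtype (Submodule.span ℤ (Set.range b)) = N' := by
        rw [b.span_eq, Submodule.map_subtype_top]
      rw [Submodule.map_span] at h1
      have h2 : ⇑N'.subtype '' Set.range ⇑b = Set.range fun i => ((b i : Fin n → ℤ)) := by
        rw [← Set.range_comp]; rfl
      rwa [h2] at h1
    have hfin : Submodule.span ℤ (Set.range fun i => π (b i)) = N := by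
      calc Submodule.span ℤ (Set.range fun i => π (b i))
          = Submodule.span ℤ (π '' (Set.range fun i => ((b i : Fin n → ℤ)))) := by
            congr 1; rw [← Set.range_comp]; rfl
        _ = Submodule.map π (Submodule.span ℤ (Set.range fun i => ((b i : Fin n → ℤ)))) := by
            rw [Submodule.map_span]
        _ = N := by rw [hb, hN]
    rw [Finset.coe_image, Finset.coe_univ, Set.image_univ, hfin]

private lemma toAddSubgroup_closure' {A : Type*} [Group A] (s : Set A) :
    Subgroup.toAddSubgroup (Subgroup.closure s) =
      AddSubgroup.closure (Additive.ofMul '' s) := by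
  apply le_antisymm
  · intro x hx
    have hx' : Additive.toMul x ∈ Subgroup.closure s := hx
    have key : ∀ g ∈ Subgroup.closure s,
        Additive.ofMul g ∈ AddSubgroup.closure (Additive.ofMul '' s) := by
      intro g hg
      induction hg using Subgroup.closure_induction with
      | mem g hgs => exact AddSubgroup.subset_closure ⟨g, hgs, rfl⟩
      | one => simpa using (zero_mem (AddSubgroup.closure (Additive.ofMul '' s)))
      | mul a b _ _ iha ihb => simpa [ofMul_mul] using add_mem iha ihb
      | inv a _ iha => simpa [ofMul_inv] using neg_mem iha
    exact key _ hx'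
  · rw [AddSubgroup.closure_le]
    rintro x ⟨g, hg, rfl⟩
    exact (Subgroup.subset_closure hg : g ∈ Subgroup.closure s)

private lemma comm_subgroup_rank_le {A : Type*} [CommGroup A] (E : Finset A)
    (hE : Subgroup.closure (E : Set A) = ⊤) (H : Subgroup A) :
    ∃ S : Finset A, S.card ≤ E.card ∧ Subgroup.closure (S : Set A) = H := by
  classical
  set n := E.card with hn
  let e := E.equivFin
  let v : Fin n → Additive A := fun i => Additive.ofMul (e.symm i : A)
  have h1 : Set.range (fun i : Fin n => ((e.symm i : A))) = (E : Set A) := by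
    ext a
    simp only [Set.mem_range, Finset.mem_coe]
    constructor
    · rintro ⟨i, rfl⟩; exact (e.symm i).2
    · intro ha; exact ⟨e ⟨a, ha⟩, by simp⟩
  have hrange : Set.range v = Additive.ofMul '' (E : Set A) := by
    have h2 : Set.range v
        = Additive.ofMul '' Set.range (fun i : Fin n => ((e.symm i : A))) := by
      rw [← Set.range_comp]; rfl
    rw [h2, h1]
  have hclos : AddSubgroup.closure (Set.range v) = ⊤ := by
    rw [hrange, ← toAddSubgroup_closure', hE]
    rfl
  have hv : Submodule.span ℤ (Set.range v) = ⊤ := by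
    rw [Submodule.eq_top_iff']
    intro x
    have hx : x ∈ (Submodule.span ℤ (Set.range v)).toAddSubgroup := by
      rw [Submodule.span_int_eq_addSubgroupClosure, hclos]
      exact AddSubgroup.mem_top x
    exact hx
  obtain ⟨S', hS'card, hS'⟩ := exists_finset_card_le_span v hv
    (AddSubgroup.toIntSubmodule (Subgroup.toAddSubgroup H))
  have hS'clos : AddSubgroup.closure (S' : Set (Additive A)) = Subgroup.toAddSubgroup H := by
    rw [← Submodule.span_int_eq_addSubgroupClosure, hS',
      AddSubgroup.toIntSubmodule_toAddSubgroup]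
  refine ⟨S'.image Additive.toMul, Finset.card_image_le.trans hS'card, ?_⟩
  apply Subgroup.toAddSubgroup.injective
  rw [toAddSubgroup_closure', Finset.coe_image]
  have himg : Additive.ofMul '' (Additive.toMul '' (S' : Set (Additive A)))
      = (S' : Set (Additive A)) := by
    simp [Set.image_image]
  rw [himg, hS'clos]

private lemma rank_le_of_le_abelian {G : Type*} [Group G] {M : Subgroup G} [IsMulCommutative M]
    (E : Finset G) (hEM : ↑E ⊆ (M : Set G)) (H : Subgroup G)
    (hHE : H ≤ Subgroup.closure (E : Set G)) :
    ∃ S : Finset G, S.card ≤ E.card ∧ Subgroup.closure (S : Set G) = H := by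
  classical
  set A : Subgroup G := Subgroup.closure (E : Set G) with hA
  have hAM : A ≤ M := (Subgroup.closure_le M).2 hEM
  letI : CommGroup ↥A :=
    { (inferInstance : Group ↥A) with
      mul_comm := fun a b => Subtype.ext
        (Subgroup.mul_comm_of_mem_isMulCommutative M (hAM a.2) (hAM b.2)) }
  let EA : Finset ↥A := E.attach.image fun x => ⟨x.1, Subgroup.subset_closure x.2⟩
  have hEAcard : EA.card ≤ E.card := Finset.card_image_le.trans (by rw [Finset.card_attach])
  have himgEA : A.subtype '' (EA : Set ↥A) = (E : Set G) := by
    ext x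
    constructor
    · rintro ⟨a, ha, rfl⟩
      obtain ⟨y, -, rfl⟩ := Finset.mem_image.1 (Finset.mem_coe.1 ha)
      exact Finset.mem_coe.2 y.2
    · intro hx
      exact ⟨⟨x, Subgroup.subset_closure hx⟩,
        Finset.mem_coe.2 (Finset.mem_image.2
          ⟨⟨x, Finset.mem_coe.1 hx⟩, Finset.mem_attach _ _, rfl⟩), rfl⟩
  have hEAtop : Subgroup.closure (EA : Set ↥A) = ⊤ := by
    apply Subgroup.map_injective A.subtype_injective
    rw [MonoidHom.map_closure, himgEA, ← MonoidHom.range_eq_map, Subgroup.range_subtype]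
  set HA : Subgroup ↥A := H.comap A.subtype with hHA
  have hmapHA : HA.map A.subtype = H := by
    rw [hHA, Subgroup.map_comap_eq, Subgroup.range_subtype, inf_eq_right.2 hHE]
  obtain ⟨SA, hSAcard, hSA⟩ := comm_subgroup_rank_le EA hEAtop HA
  refine ⟨SA.image (fun a => A.subtype a), Finset.card_image_le.trans (hSAcard.trans hEAcard), ?_⟩
  have hset : ((SA.image fun a => A.subtype a) : Set G) = A.subtype '' (SA : Set ↥A) :=
    Finset.coe_image
  rw [hset, ← MonoidHom.map_closure, hSA, hmapHA]

end AbelianRank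

/-- A group has rank at most `r` if every finitely generated subgroup can be
generated by at most `r` elements. -/
def HasRankLE (G : Type*) [Group G] (r : ℕ) : Prop :=
  ∀ H : Subgroup G, H.FG → ∃ S : Finset G, S.card ≤ r ∧ Subgroup.closure (S : Set G) = H

/-- If `G/Z(G)` has finite rank `r` and `M` is a normal abelian subgroup
of `G`, then `[M,G]` has rank at most `r²`. -/
theorem rank_commutator_le_sq
    (G : Type*) [Group G] (r : ℕ)
    (hZ : HasRankLE (G ⧸ Subgroup.center G) r)
    (M : Subgroup G) [M.Normal] [IsMulCommutative M] :
    HasRankLE (⁅M, (⊤ : Subgroup G)⁆ : Subgroup G) (r ^ 2) := by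
  classical
  set K : Subgroup G := ⁅M, (⊤ : Subgroup G)⁆ with hKdef
  intro H hH
  obtain ⟨T₀, hT₀⟩ := hH
  set mk : G →* G ⧸ Subgroup.center G := QuotientGroup.mk' (Subgroup.center G) with hmkdef
  have hmksurj : ∀ q : G ⧸ Subgroup.center G, ∃ g : G, mk g = q :=
    fun q => QuotientGroup.mk'_surjective _ q
  choose lift hlift using hmksurj
  set T : Finset G := T₀.image (K.subtype) with hTdef
  set H' : Subgroup G := H.map K.subtype with hH'def
  have hTclos : Subgroup.closure (T : Set G) = H' := by
    rw [hTdef, Finset.coe_image, ← MonoidHom.map_closure, hT₀]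
  have hH'K : H' ≤ K := Subgroup.map_subtype_le H
  have hKclos : K = Subgroup.closure {g | ∃ m ∈ M, ∃ x ∈ (⊤ : Subgroup G), ⁅m, x⁆ = g} :=
    Subgroup.commutator_def M ⊤
  obtain ⟨C, hCsub, hTC⟩ := finset_mem_closure_finset T
    (fun t ht => hKclos ▸ hH'K (hTclos ▸ Subgroup.subset_closure (Finset.mem_coe.2 ht)))
  have hCsub' : ∀ c ∈ C, ∃ m, m ∈ M ∧ ∃ x, x ∈ (⊤ : Subgroup G) ∧ ⁅m, x⁆ = c :=
    fun c hc => hCsub (Finset.mem_coe.2 hc)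
  choose mc hmc gc hgc hceq using hCsub'
  -- bound second components via rank of G/Z
  set Cg : Finset G := C.attach.image (fun c => gc c.1 c.2) with hCgdef
  have hQfg : (Subgroup.closure ((Cg.image mk : Finset (G ⧸ Subgroup.center G)) :
      Set (G ⧸ Subgroup.center G))).FG := ⟨Cg.image mk, rfl⟩
  obtain ⟨S1, hS1card, hS1clos⟩ := hZ _ hQfg
  set Y₀ : Finset G := S1.image lift with hY₀def
  have hY₀card : Y₀.card ≤ r := Finset.card_image_le.trans hS1card
  have hmapY : Subgroup.map mk (Subgroup.closure (Y₀ : Set G))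
      = Subgroup.closure (S1 : Set (G ⧸ Subgroup.center G)) := by
    rw [MonoidHom.map_closure, hY₀def, Finset.coe_image, Set.image_image]
    simp [hlift]
  have hgY : ∀ c (hc : c ∈ C), ∃ w ∈ Subgroup.closure (Y₀ : Set G), ∃ z ∈ Subgroup.center G,
      gc c hc = w * z := by
    intro c hc
    have h0 : mk (gc c hc) ∈ Subgroup.closure ((Cg.image mk : Finset (G ⧸ Subgroup.center G)) :
        Set (G ⧸ Subgroup.center G)) := by
      apply Subgroup.subset_closure
      exact Finset.mem_coe.2 (Finset.mem_image.2 ⟨gc c hc,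
        Finset.mem_image.2 ⟨⟨c, hc⟩, Finset.mem_attach _ _, rfl⟩, rfl⟩)
    rw [← hS1clos, ← hmapY] at h0
    obtain ⟨w, hw, hweq⟩ := h0
    refine ⟨w, hw, w⁻¹ * gc c hc, ?_, by group⟩
    have hone : mk (w⁻¹ * gc c hc) = 1 := by
      rw [map_mul, map_inv, hweq]; group
    have hker : w⁻¹ * gc c hc ∈ mk.ker := (MonoidHom.mem_ker).2 hone
    rwa [hmkdef, QuotientGroup.ker_mk'] at hker
  -- T is contained in the closure of commutators with second component in Y₀
  have hCN : ∀ c ∈ C, c ∈ Subgroup.closure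
      {x | ∃ m' ∈ (M : Set G), ∃ y ∈ (Y₀ : Set G), ⁅m', y⁆ = x} := by
    intro c hc
    obtain ⟨w, hw, z, hz, hgceq⟩ := hgY c hc
    have heq2 : ⁅mc c hc, gc c hc⁆ = ⁅mc c hc, w⁆ := by
      rw [hgceq, comm_mul_central_right _ _ _ hz]
    rw [← hceq c hc, heq2]
    exact commutator_snd_mem_closure (Y₀ : Set G) hw _ (hmc c hc)
  have hTN : ∀ t ∈ T, t ∈ Subgroup.closure
      {x | ∃ m' ∈ (M : Set G), ∃ y ∈ (Y₀ : Set G), ⁅m', y⁆ = x} := by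
    intro t ht
    exact (Subgroup.closure_le _).2 (fun c hc => hCN c (Finset.mem_coe.1 hc)) (hTC t ht)
  obtain ⟨D, hDsub, hTD⟩ := finset_mem_closure_finset T hTN
  have hDsub' : ∀ d ∈ D, ∃ m', m' ∈ (M : Set G) ∧ ∃ y, y ∈ (Y₀ : Set G) ∧ ⁅m', y⁆ = d :=
    fun d hd => hDsub (Finset.mem_coe.2 hd)
  choose md hmd yd hyd hdeq using hDsub'
  -- bound first components via rank of G/Z
  set Dm : Finset G := D.attach.image (fun d => md d.1 d.2) with hDmdef
  have hDmM : (Dm : Set G) ⊆ (M : Set G) := by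
    intro x hx
    obtain ⟨d, -, rfl⟩ := Finset.mem_image.1 (Finset.mem_coe.1 hx)
    exact hmd d.1 d.2
  have hBfg : (Subgroup.closure ((Dm.image mk : Finset (G ⧸ Subgroup.center G)) :
      Set (G ⧸ Subgroup.center G))).FG := ⟨Dm.image mk, rfl⟩
  obtain ⟨S2, hS2card, hS2clos⟩ := hZ _ hBfg
  have hS2mem : ∀ s : S2, ∃ b ∈ Subgroup.closure (Dm : Set G), mk b = (s : G ⧸ Subgroup.center G) := by
    intro s
    have h1 : (s : G ⧸ Subgroup.center G) ∈ Subgroup.closure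
        ((Dm.image mk : Finset (G ⧸ Subgroup.center G)) : Set (G ⧸ Subgroup.center G)) := by
      rw [← hS2clos]; exact Subgroup.subset_closure (Finset.mem_coe.2 s.2)
    have h2 : (s : G ⧸ Subgroup.center G) ∈ Subgroup.map mk (Subgroup.closure (Dm : Set G)) := by
      rwa [MonoidHom.map_closure, ← Finset.coe_image]
    obtain ⟨b, hb, hbeq⟩ := h2
    exact ⟨b, hb, hbeq⟩
  choose bf hbf hbfeq using hS2mem
  set B₀ : Finset G := S2.attach.image bf with hB₀def
  have hB₀card : B₀.card ≤ r :=
    Finset.card_image_le.trans (by rw [Finset.card_attach]; exact hS2card)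
  have hB₀M : (B₀ : Set G) ⊆ (M : Set G) := by
    intro x hx
    obtain ⟨s, -, rfl⟩ := Finset.mem_image.1 (Finset.mem_coe.1 hx)
    exact (Subgroup.closure_le M).2 hDmM (hbf s)
  have hmdB : ∀ d (hd : d ∈ D), ∃ b ∈ Subgroup.closure (B₀ : Set G), ∃ z ∈ Subgroup.center G,
      md d hd = b * z := by
    intro d hd
    have h1 : mk (md d hd) ∈ Subgroup.closure
        ((Dm.image mk : Finset (G ⧸ Subgroup.center G)) : Set (G ⧸ Subgroup.center G)) := by
      apply Subgroup.subset_closure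
      exact Finset.mem_coe.2 (Finset.mem_image.2 ⟨md d hd,
        Finset.mem_image.2 ⟨⟨d, hd⟩, Finset.mem_attach _ _, rfl⟩, rfl⟩)
    rw [← hS2clos] at h1
    have h2 : Subgroup.closure (S2 : Set (G ⧸ Subgroup.center G))
        ≤ Subgroup.map mk (Subgroup.closure (B₀ : Set G)) := by
      rw [Subgroup.closure_le]
      intro s hs
      exact ⟨bf ⟨s, Finset.mem_coe.1 hs⟩,
        Subgroup.subset_closure (Finset.mem_coe.2 (Finset.mem_image.2
          ⟨⟨s, Finset.mem_coe.1 hs⟩, Finset.mem_attach _ _, rfl⟩)),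
        hbfeq ⟨s, Finset.mem_coe.1 hs⟩⟩
    obtain ⟨b, hb, hbeq⟩ := h2 h1
    refine ⟨b, hb, b⁻¹ * md d hd, ?_, by group⟩
    have hone : mk (b⁻¹ * md d hd) = 1 := by
      rw [map_mul, map_inv, hbeq]; group
    have hker : b⁻¹ * md d hd ∈ mk.ker := (MonoidHom.mem_ker).2 hone
    rwa [hmkdef, QuotientGroup.ker_mk'] at hker
  -- the final generating set
  set E : Finset G := (B₀ ×ˢ Y₀).image (fun p => ⁅p.1, p.2⁆) with hEdef
  have hEcard : E.card ≤ r ^ 2 := by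
    calc E.card ≤ (B₀ ×ˢ Y₀).card := Finset.card_image_le
      _ = B₀.card * Y₀.card := Finset.card_product _ _
      _ ≤ r * r := Nat.mul_le_mul hB₀card hY₀card
      _ = r ^ 2 := (sq r).symm
  have hEM : (E : Set G) ⊆ (M : Set G) := by
    intro x hx
    obtain ⟨⟨b, y⟩, hby, rfl⟩ := Finset.mem_image.1 (Finset.mem_coe.1 hx)
    exact commutator_mem_of_left (hB₀M (Finset.mem_coe.2 (Finset.mem_product.1 hby).1)) y
  have hDE : ∀ d ∈ D, d ∈ Subgroup.closure (E : Set G) := by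
    intro d hd
    obtain ⟨b, hb, z, hz, hmdeq⟩ := hmdB d hd
    have h2 := commutator_fst_mem_closure (M := M) hB₀M (yd d hd) hb
    have h3 : d = ⁅b, yd d hd⁆ := by
      conv_lhs => rw [← hdeq d hd]
      rw [hmdeq, comm_mul_central_left _ _ _ hz]
    rw [h3]
    have hsub : {x | ∃ b₀ ∈ (B₀ : Set G), ⁅b₀, yd d hd⁆ = x} ⊆ (E : Set G) := by
      rintro x ⟨b₀, hb₀, rfl⟩
      exact Finset.mem_coe.2 (Finset.mem_image.2 ⟨(b₀, yd d hd),
        Finset.mem_product.2 ⟨Finset.mem_coe.1 hb₀, Finset.mem_coe.1 (hyd d hd)⟩, rfl⟩)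
    exact Subgroup.closure_mono hsub h2
  have hH'E : H' ≤ Subgroup.closure (E : Set G) := by
    rw [← hTclos, Subgroup.closure_le]
    intro t ht
    exact (Subgroup.closure_le _).2 (fun d hd => hDE d (Finset.mem_coe.1 hd))
      (hTD t (Finset.mem_coe.1 ht))
  obtain ⟨SG, hSGcard, hSGclos⟩ := rank_le_of_le_abelian (M := M) E hEM H' hH'E
  have hSGK : ∀ x ∈ SG, x ∈ K := by
    intro x hx
    exact hH'K (hSGclos ▸ Subgroup.subset_closure (Finset.mem_coe.2 hx))
  set SK : Finset ↥K := SG.attach.image (fun x => (⟨x.1, hSGK x.1 x.2⟩ : ↥K)) with hSKdef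
  refine ⟨SK, ?_, ?_⟩
  · exact Finset.card_image_le.trans (by rw [Finset.card_attach]; exact hSGcard.trans hEcard)
  · apply Subgroup.map_injective K.subtype_injective
    rw [MonoidHom.map_closure]
    have himg : K.subtype '' (SK : Set ↥K) = (SG : Set G) := by
      ext x
      constructor
      · rintro ⟨a, ha, rfl⟩
        obtain ⟨y, -, rfl⟩ := Finset.mem_image.1 (Finset.mem_coe.1 ha)
        exact Finset.mem_coe.2 y.2
      · intro hx
        exact ⟨⟨x, hSGK x (Finset.mem_coe.1 hx)⟩,
          Finset.mem_coe.2 (Finset.mem_image.2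
            ⟨⟨x, Finset.mem_coe.1 hx⟩, Finset.mem_attach _ _, rfl⟩), rfl⟩
    rw [himg, hSGclos, hH'def]
end

section
/- For all positive integers n and r there exists an integer s = s(n,r) such that every finite p-group of exponent dividing p^n and rank at most r has order at most p^s. -/
open Subgroup


lemma abelian_card_le {G : Type} [Group G] [Finite G] (A : Subgroup G)
    (hA : ∀ a ∈ A, ∀ b ∈ A, a * b = b * a)
    (S : Finset G) (hS : Subgroup.closure (S : Set G) = A)
    (m : ℕ) (hm1 : 1 < m) (hexp : ∀ g : G, g ^ m = 1) :
    Nat.card A ≤ m ^ S.card := by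
  classical
  have : NeZero m := ⟨by omega⟩
  letI : CommGroup ↥A :=
    { (inferInstance : Group ↥A) with
      mul_comm := fun a b => Subtype.ext (hA _ a.2 _ b.2) }
  have hsA : ∀ s : G, s ∈ S → s ∈ A := fun s hs => hS ▸ Subgroup.subset_closure hs
  set e : ↥S → ↥A := fun s => ⟨(s : G), hsA s s.2⟩ with he
  have hepow : ∀ s : ↥S, (e s) ^ m = 1 := fun s => Subtype.ext (hexp s)
  set F : (↥S → ZMod m) → ↥A := fun c => ∏ s : ↥S, (e s) ^ (c s).val with hF
  have hFadd : ∀ c d, F (c + d) = F c * F d := by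
    intro c d
    rw [hF]
    simp only []
    rw [← Finset.prod_mul_distrib]
    refine Finset.prod_congr rfl fun s _ => ?_
    rw [← pow_add, Pi.add_apply, ZMod.val_add]
    exact (pow_eq_pow_mod _ (hepow s)).symm
  have hF0 : F 0 = 1 := by
    rw [hF]; simp
  have hsurj : Function.Surjective F := by
    intro a
    have ha : (a : G) ∈ Subgroup.closure (S : Set G) := hS ▸ a.2
    have key : ∀ g (hg : g ∈ Subgroup.closure (S : Set G)), ∃ c, ((F c : ↥A) : G) = g := by
      intro g hg
      induction hg using Subgroup.closure_induction with
      | mem x hx =>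
          refine ⟨fun t => if t = ⟨x, hx⟩ then 1 else 0, ?_⟩
          rw [hF]
          simp only []
          rw [Finset.prod_eq_single_of_mem (⟨x, hx⟩ : ↥S) (Finset.mem_univ _)]
          · haveI : Fact (1 < m) := ⟨hm1⟩
            simp [ZMod.val_one, he]
          · intro t _ ht; simp [ht]
      | one => exact ⟨0, by rw [hF0]; rfl⟩
      | mul x y hx hy ihx ihy =>
          obtain ⟨c, hc⟩ := ihx; obtain ⟨d, hd⟩ := ihy
          exact ⟨c + d, by rw [hFadd]; rw [Submonoid.coe_mul, hc, hd]⟩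
      | inv x hx ihx =>
          obtain ⟨c, hc⟩ := ihx
          refine ⟨-c, ?_⟩
          have : F (-c) * F c = 1 := by rw [← hFadd, neg_add_cancel, hF0]
          have h2 : F (-c) = (F c)⁻¹ := eq_inv_of_mul_eq_one_left this
          rw [h2]; push_cast [hc]; rfl
    obtain ⟨c, hc⟩ := key a ha
    exact ⟨c, Subtype.ext hc⟩
  calc Nat.card ↥A ≤ Nat.card (↥S → ZMod m) := Nat.card_le_card_of_surjective F hsurj
    _ = m ^ S.card := by
        simp [Nat.card_eq_fintype_card, Fintype.card_fun, ZMod.card]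


lemma mulAut_card_le {G : Type} [Group G] [Finite G] (A : Subgroup G)
    (S : Finset G) (hS : Subgroup.closure (S : Set G) = A) :
    Nat.card (MulAut ↥A) ≤ Nat.card ↥A ^ S.card := by
  classical
  have hsA : ∀ s : G, s ∈ S → s ∈ A := fun s hs => hS ▸ Subgroup.subset_closure hs
  have hinj : Function.Injective
      (fun (φ : MulAut ↥A) (s : ↥S) => φ ⟨(s : G), hsA s s.2⟩) := by
    intro φ ψ h
    have hagree : ∀ s : G, ∀ hs : s ∈ S, φ ⟨s, hsA s hs⟩ = ψ ⟨s, hsA s hs⟩ := by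
      intro s hs
      exact congrFun h ⟨s, hs⟩
    ext a
    have ha : (a : G) ∈ Subgroup.closure (S : Set G) := hS ▸ a.2
    have key : ∀ g (hg : g ∈ Subgroup.closure (S : Set G)),
        ∀ hgA : g ∈ A, φ ⟨g, hgA⟩ = ψ ⟨g, hgA⟩ := by
      intro g hg
      induction hg using Subgroup.closure_induction with
      | mem x hx => intro _; exact hagree x hx
      | one => intro h1; show φ (1 : ↥A) = ψ (1 : ↥A); rw [map_one, map_one]
      | mul x y hx hy ihx ihy =>
          intro hxy
          have hxA : x ∈ A := hS ▸ hx
          have hyA : y ∈ A := hS ▸ hy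
          have : (⟨x * y, hxy⟩ : ↥A) = ⟨x, hxA⟩ * ⟨y, hyA⟩ := rfl
          rw [this, map_mul, map_mul, ihx hxA, ihy hyA]
      | inv x hx ihx =>
          intro hxi
          have hxA : x ∈ A := hS ▸ hx
          have : (⟨x⁻¹, hxi⟩ : ↥A) = (⟨x, hxA⟩ : ↥A)⁻¹ := rfl
          rw [this, map_inv, map_inv, ihx hxA]
    have := key a ha a.2
    simpa using this
  calc Nat.card (MulAut ↥A) ≤ Nat.card (↥S → ↥A) := Nat.card_le_card_of_injective _ hinj
    _ = Nat.card ↥A ^ S.card := by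
        have : Fintype G := Fintype.ofFinite G
        simp [Nat.card_eq_fintype_card, Fintype.card_fun]


lemma exists_self_centralizing {p : ℕ} [Fact p.Prime] {G : Type} [Group G] [Finite G]
    (hG : IsPGroup p G) :
    ∃ A : Subgroup G, A.Normal ∧ (∀ a ∈ A, ∀ b ∈ A, a * b = b * a) ∧
      Subgroup.centralizer (A : Set G) = A := by
  classical
  haveI : Finite (Subgroup G) :=
    Finite.of_injective (fun H => (H : Set G)) (fun _ _ h => SetLike.coe_injective h)
  set 𝒮 : Set (Subgroup G) := {A | A.Normal ∧ ∀ a ∈ A, ∀ b ∈ A, a * b = b * a} with h𝒮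
  have hbot : (⊥ : Subgroup G) ∈ 𝒮 := by
    constructor
    · infer_instance
    · intro a ha b hb
      rw [Subgroup.mem_bot] at ha hb; rw [ha, hb]
  obtain ⟨A, hA𝒮, hmax⟩ := Set.Finite.exists_maximalFor id 𝒮 (Set.toFinite 𝒮) ⟨⊥, hbot⟩
  obtain ⟨hAnorm, hAab⟩ := hA𝒮
  haveI := hAnorm
  refine ⟨A, hAnorm, hAab, ?_⟩
  set C := Subgroup.centralizer (A : Set G) with hC
  have hAC : A ≤ C := fun a ha => Subgroup.mem_centralizer_iff.mpr fun b hb => hAab b hb a ha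
  refine le_antisymm ?_ hAC
  by_contra hCA
  -- get x ∈ C, x ∉ A
  obtain ⟨x, hxC, hxA⟩ : ∃ x, x ∈ C ∧ x ∉ A := by
    by_contra h; push_neg at h; exact hCA fun c hc => h c hc
  -- C is normal
  have hCnorm : C.Normal := by
    constructor
    intro c hc g
    rw [Subgroup.mem_centralizer_iff]
    intro a ha
    have ha' : g⁻¹ * a * g ∈ A := by
      have := hAnorm.conj_mem a ha g⁻¹
      simpa [mul_assoc] using this
    have hcomm := Subgroup.mem_centralizer_iff.mp hc _ ha'
    -- (g⁻¹ a g) c = c (g⁻¹ a g)  →  a (g c g⁻¹) = (g c g⁻¹) a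
    have := congrArg (fun z => g * z * g⁻¹) hcomm
    simpa [mul_assoc] using this
  -- quotient
  set π := QuotientGroup.mk' A with hπ
  set Q := G ⧸ A
  have hQ : IsPGroup p Q := hG.to_quotient A
  set N' : Subgroup Q := C.map π with hN'
  haveI hN'norm : N'.Normal := Subgroup.Normal.map hCnorm π (QuotientGroup.mk'_surjective A)
  have hy0 : π x ∈ N' := ⟨x, hxC, rfl⟩
  have hy0ne : π x ≠ 1 := fun h => hxA ((QuotientGroup.eq_one_iff x).mp h)
  haveI : Nontrivial ↥N' := ⟨⟨⟨π x, hy0⟩, 1, by simp [Subtype.ext_iff, hy0ne]⟩⟩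
  have hpN : p ∣ Nat.card ↥N' := by
    obtain ⟨k, hk0, hk⟩ := ((hQ.to_subgroup N').nontrivial_iff_card).mp inferInstance
    exact hk ▸ dvd_pow_self p hk0.ne'
  -- conj action of ConjAct Q on N'
  have hQ' : IsPGroup p (ConjAct Q) := hQ.of_equiv ConjAct.toConjAct
  have h1fix : (1 : ↥N') ∈ MulAction.fixedPoints (ConjAct Q) ↥N' := by
    intro g
    apply Subtype.ext
    rw [ConjAct.Subgroup.val_conj_smul]
    simp [ConjAct.smul_def]
  obtain ⟨b, hbfix, hbne⟩ :=
    hQ'.exists_fixed_point_of_prime_dvd_card_of_fixed_point (α := ↥N') hpN h1fix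
  set y : Q := (b : Q) with hy
  have hyne : y ≠ 1 := by
    intro h
    exact hbne (Subtype.ext h.symm)
  have hycentral : ∀ q : Q, q * y * q⁻¹ = y := by
    intro q
    have := hbfix (ConjAct.toConjAct q)
    have := congrArg (Subtype.val) this
    rw [ConjAct.Subgroup.val_conj_smul] at this
    simpa [ConjAct.smul_def] using this
  -- lift y
  obtain ⟨x', hx'C, hx'y⟩ : ∃ x', x' ∈ C ∧ π x' = y := b.2
  have hx'A : x' ∉ A := by
    intro h
    apply hyne
    rw [← hx'y]
    exact (QuotientGroup.eq_one_iff x').mpr h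
  -- B := preimage of zpowers y
  set B : Subgroup G := (Subgroup.zpowers y).comap π with hB
  have hABle : A ≤ B := by
    intro a ha
    show π a ∈ Subgroup.zpowers y
    have h1 : π a = 1 := (QuotientGroup.eq_one_iff a).mpr ha
    rw [h1]
    exact Subgroup.one_mem _
  have hx'B : x' ∈ B := by
    show π x' ∈ Subgroup.zpowers y
    rw [hx'y]; exact Subgroup.mem_zpowers y
  -- representation of elements of B
  have hrep : ∀ g ∈ B, ∃ (a : G) (k : ℤ), a ∈ A ∧ g = a * x' ^ k := by
    intro g hg
    obtain ⟨k, hk⟩ := Subgroup.mem_zpowers_iff.mp hg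
    refine ⟨g * (x' ^ k)⁻¹, k, ?_, by group⟩
    have h1 : π (g * (x' ^ k)⁻¹) = 1 := by
      rw [map_mul, map_inv, map_zpow, hx'y, ← hk]; group
    exact (QuotientGroup.eq_one_iff _).mp h1
  have hBnorm : B.Normal := by
    constructor
    intro g hg q
    show π (q * g * q⁻¹) ∈ Subgroup.zpowers y
    obtain ⟨k, hk⟩ := Subgroup.mem_zpowers_iff.mp hg
    rw [map_mul, map_mul, map_inv, ← hk]
    have : π q * y ^ k * (π q)⁻¹ = (π q * y * (π q)⁻¹) ^ k := (conj_zpow).symm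
    rw [this, hycentral (π q)]
    exact Subgroup.zpow_mem _ (Subgroup.mem_zpowers y) k
  have hBab : ∀ a ∈ B, ∀ c ∈ B, a * c = c * a := by
    intro b1 hb1 b2 hb2
    obtain ⟨a1, k1, ha1, rfl⟩ := hrep b1 hb1
    obtain ⟨a2, k2, ha2, rfl⟩ := hrep b2 hb2
    have hxa : ∀ a ∈ A, Commute x' a := fun a ha =>
      (Subgroup.mem_centralizer_iff.mp hx'C a ha).symm
    have c1 : Commute a1 a2 := hAab a1 ha1 a2 ha2
    have c2 : Commute (x' ^ k1) a2 := (hxa a2 ha2).zpow_left k1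
    have c3 : Commute a1 (x' ^ k2) := ((hxa a1 ha1).zpow_left k2).symm
    have c4 : Commute (x' ^ k1) (x' ^ k2) := (Commute.refl x').zpow_zpow k1 k2
    exact ((c1.mul_right c3).mul_left (c2.mul_right c4)).symm.eq.symm
  -- contradiction with maximality
  have : A = B := le_antisymm hABle (hmax ⟨hBnorm, hBab⟩ hABle)
  exact hx'A (this ▸ hx'B)


/-- For all positive integers `n, r` there is `s = s(n,r)` such that any
finite `p`-group of exponent dividing `p^n` and rank at most `r` has order at most `p^s`. -/
theorem card_le_of_exponent_and_rank
    (n r : ℕ) (hn : 0 < n) (hr : 0 < r) :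
    ∃ s : ℕ, ∀ (p : ℕ), p.Prime →
      ∀ (G : Type) [Group G] [Fintype G], IsPGroup p G →
        (∀ g : G, g ^ (p ^ n) = 1) → HasRankLE G r →
        Fintype.card G ≤ p ^ s := by
  classical
  refine ⟨n * r * r + n * r, ?_⟩
  intro p hp G _ _ hG hexp hrank
  haveI : Fact p.Prime := ⟨hp⟩
  obtain ⟨A, hAnorm, hAab, hAcent⟩ := exists_self_centralizing hG
  haveI := hAnorm
  have hAfg : A.FG := ⟨(A : Set G).toFinset, by simp⟩
  obtain ⟨S, hScard, hSclosure⟩ := hrank A hAfg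
  have hm1 : 1 < p ^ n := Nat.one_lt_pow hn.ne' hp.one_lt
  have hcardA : Nat.card ↥A ≤ (p ^ n) ^ r :=
    le_trans (abelian_card_le A hAab S hSclosure (p ^ n) hm1 hexp)
      (Nat.pow_le_pow_right (lt_trans one_pos hm1) hScard)
  have hAut : Nat.card (MulAut ↥A) ≤ ((p ^ n) ^ r) ^ r := by
    calc Nat.card (MulAut ↥A) ≤ Nat.card ↥A ^ S.card := mulAut_card_le A S hSclosure
      _ ≤ ((p ^ n) ^ r) ^ S.card := Nat.pow_le_pow_left hcardA _
      _ ≤ ((p ^ n) ^ r) ^ r := Nat.pow_le_pow_right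
            (Nat.one_le_pow r (p ^ n) (lt_trans one_pos hm1)) hScard
  set ψ : G →* MulAut ↥A := MulAut.conjNormal with hψ
  have hker : ψ.ker = A := by
    ext g
    constructor
    · intro hg
      rw [MonoidHom.mem_ker] at hg
      rw [← hAcent]
      rw [Subgroup.mem_centralizer_iff]
      intro a ha
      have h1 : ψ g ⟨a, ha⟩ = ⟨a, ha⟩ := by rw [hg]; rfl
      have h2 : g * a * g⁻¹ = a := by
        have := congrArg Subtype.val h1
        simpa [hψ, MulAut.conjNormal_apply] using this
      calc a * g = (g * a * g⁻¹) * g := by rw [h2]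
        _ = g * a := by group
    · intro hg
      rw [MonoidHom.mem_ker]
      apply MulEquiv.ext
      intro h
      apply Subtype.ext
      have : (ψ g h : G) = g * h * g⁻¹ := MulAut.conjNormal_apply g h
      rw [this]
      have hcomm := hAab g hg h h.2
      rw [hcomm]
      group
      rfl
  haveI : Finite (MulAut ↥A) :=
    Finite.of_injective (fun φ : MulAut ↥A => (φ : ↥A → ↥A))
      (fun _ _ h => by ext a; exact congrArg Subtype.val (congrFun h a))
  have hquot : Nat.card (G ⧸ A) ≤ Nat.card (MulAut ↥A) := by
    haveI : (ψ.ker).Normal := MonoidHom.normal_ker ψ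
    have e : Nat.card (G ⧸ A) = Nat.card (G ⧸ ψ.ker) :=
      Nat.card_congr (QuotientGroup.quotientMulEquivOfEq hker.symm).toEquiv
    rw [e]
    exact Nat.card_le_card_of_injective (QuotientGroup.kerLift ψ)
      (QuotientGroup.kerLift_injective ψ)
  have hcard : Nat.card G = Nat.card (G ⧸ A) * Nat.card ↥A :=
    Subgroup.card_eq_card_quotient_mul_card_subgroup A
  have : Nat.card G ≤ ((p ^ n) ^ r) ^ r * (p ^ n) ^ r := by
    rw [hcard]
    exact Nat.mul_le_mul (le_trans hquot hAut) hcardA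
  calc Fintype.card G = Nat.card G := (Nat.card_eq_fintype_card).symm
    _ ≤ ((p ^ n) ^ r) ^ r * (p ^ n) ^ r := this
    _ = p ^ (n * r * r + n * r) := by ring
end

section
/- Let G be a finite soluble group with an unrefinable (chief) normal series G = N_1 > N_2 > … > N_k > N_{k+1} = 1, and suppose every soluble group of automorphisms of each factor N_i/N_{i+1} has derived length at most d. Then the d-th derived subgroup of G is nilpotent, i.e., G^{(d)} ≤ F(G). -/
/-- Let `G` be a finite soluble group with an unrefinable (chief) normal
series `G = N 0 ≥ N 1 ≥ … ≥ N k = ⊥`, and suppose every soluble group of automorphisms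
of each factor `N i / N (i+1)` has derived length at most `d`. Then the `d`-th derived
subgroup of `G` is nilpotent (i.e. `G^{(d)} ≤ F(G)`). -/
theorem derived_le_fitting_of_chief_series
    (G : Type) [Group G] [Fintype G] [Group.IsSolvable G] (k d : ℕ)
    (N : ℕ → Subgroup G)
    (hN0 : N 0 = ⊤) (hNk : N k = ⊥)
    (hmono : ∀ i, N (i + 1) ≤ N i)
    (hnormal : ∀ i, (N i).Normal)
    [inst : ∀ i, ((N (i + 1)).subgroupOf (N i)).Normal]
    (hunref : ∀ i < k, ∀ H : Subgroup G, H.Normal →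
      N (i + 1) ≤ H → H ≤ N i → H = N (i + 1) ∨ H = N i)
    (haut : ∀ i < k,
      ∀ A : Subgroup (MulAut (↥(N i) ⧸ (N (i + 1)).subgroupOf (N i))),
        IsSolvable A → derivedSeries A d = ⊥) :
    Group.IsNilpotent (derivedSeries G d) := by
  have key : ∀ i < k, ∀ g ∈ derivedSeries G d, ∀ n ∈ N i,
      g * n * g⁻¹ * n⁻¹ ∈ N (i + 1) := by
    intro i hi g hg n hn
    haveI := hnormal i
    haveI := hnormal (i + 1)
    have hmapS : ∀ g : G,
        ((N (i + 1)).subgroupOf (N i)).map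
          ((MulAut.conjNormal g : MulAut (N i)) : ↥(N i) →* ↥(N i))
          = (N (i + 1)).subgroupOf (N i) := by
      intro g
      apply le_antisymm
      · rintro y ⟨x, hx, rfl⟩
        simp only [SetLike.mem_coe, Subgroup.mem_subgroupOf] at hx ⊢
        simpa using (hnormal (i + 1)).conj_mem _ hx g
      · intro x hx
        simp only [SetLike.mem_coe, Subgroup.mem_subgroupOf] at hx
        refine ⟨(MulAut.conjNormal g).symm x, ?_, by simp⟩
        simp only [SetLike.mem_coe, Subgroup.mem_subgroupOf]
        rw [MulAut.conjNormal_symm_apply]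
        simpa using (hnormal (i + 1)).conj_mem _ hx g⁻¹
    let φ : G →* MulAut (↥(N i) ⧸ (N (i + 1)).subgroupOf (N i)) :=
      { toFun := fun g => QuotientGroup.congr _ _ (MulAut.conjNormal g) (hmapS g)
        map_one' := by
          ext x
          induction x using QuotientGroup.induction_on with
          | H x => simp [QuotientGroup.congr_mk]
        map_mul' := by
          intro a b
          ext x
          induction x using QuotientGroup.induction_on with
          | H x => simp [QuotientGroup.congr_mk] }
    haveI : IsSolvable ↥φ.range := solvable_of_surjective φ.rangeRestrict_surjective
    have hd : derivedSeries ↥φ.range d = ⊥ := haut i hi φ.range this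
    have h1 : φ.rangeRestrict g = 1 := by
      have hle := map_derivedSeries_le_derivedSeries φ.rangeRestrict d
      rw [hd, le_bot_iff] at hle
      have hmem : φ.rangeRestrict g ∈
          ((derivedSeries G d).map φ.rangeRestrict : Subgroup ↥φ.range) := ⟨g, hg, rfl⟩
      rw [hle] at hmem
      exact hmem
    have hφg : φ g = 1 := by
      have := congrArg (Subtype.val) h1
      exact this
    have hqe := congrArg
      (fun (e : MulAut (↥(N i) ⧸ (N (i + 1)).subgroupOf (N i))) =>
        e (QuotientGroup.mk ⟨n, hn⟩)) hφg
    simp only [φ, MonoidHom.coe_mk, OneHom.coe_mk, QuotientGroup.congr_mk,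
      MulAut.one_apply] at hqe
    rw [QuotientGroup.eq, Subgroup.mem_subgroupOf] at hqe
    have h2 : (g * n⁻¹ * g⁻¹) * n ∈ N (i + 1) := by simpa [mul_assoc] using hqe
    have h3 : n⁻¹ * (g * n * g⁻¹) ∈ N (i + 1) := by
      have := (N (i + 1)).inv_mem h2
      simpa [mul_assoc] using this
    have := (hnormal (i + 1)).conj_mem _ h3 n
    simpa [mul_assoc] using this
  set H := derivedSeries G d with hH
  have lcs_le : ∀ n, n ≤ k → lowerCentralSeries (⊤ : Subgroup ↥H) n ≤ (N n).subgroupOf H := by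
    intro n
    induction n with
    | zero => intro _; simp [hN0]
    | succ n ih =>
      intro hnk
      show ⁅lowerCentralSeries (⊤ : Subgroup ↥H) n, (⊤ : Subgroup ↥H)⁆ ≤ (N (n + 1)).subgroupOf H
      rw [Subgroup.commutator_le]
      intro x hx y _
      have hxN : (x : G) ∈ N n := ih (Nat.le_of_succ_le hnk) hx
      have hyH : (y : G) ∈ derivedSeries G d := y.2
      rw [Subgroup.mem_subgroupOf]
      have hc : (y : G) * x * (y : G)⁻¹ * (x : G)⁻¹ ∈ N (n + 1) :=
        key n hnk (y : G) hyH (x : G) hxN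
      have hco : ((@Bracket.bracket _ _ commutatorElement x y : ↥H) : G) = ((y : G) * x * (y : G)⁻¹ * (x : G)⁻¹)⁻¹ := by
        simp [commutatorElement_def, mul_assoc]
      rw [hco]
      exact (N (n + 1)).inv_mem hc
  have hlcs : lowerCentralSeries (⊤ : Subgroup ↥H) k = ⊥ := by
    have := lcs_le k le_rfl
    rw [hNk] at this
    simpa [Subgroup.bot_subgroupOf] using le_bot_iff.mp (by simpa using this)
  exact Subgroup.nilpotent_iff_lowerCentralSeries.mpr ⟨k, hlcs⟩
end

section
/- Let G be a finitely generated group with a normal abelian subgroup N such that G/N can be generated by r elements and N/C_N(x) has rank at most r for every x ∈ G. Then [N,G] has rank at most r². -/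
open scoped commutatorElement

lemma lemA_add {M : Type*} [AddCommGroup M] (T : Finset M) (H : AddSubgroup M)
    (hH : H ≤ AddSubgroup.closure (T : Set M)) :
    ∃ S : Finset M, S.card ≤ T.card ∧ AddSubgroup.closure (S : Set M) = H := by
  classical
  set n := T.card with hn
  have e := T.equivFin
  set v : Fin n → M := fun i => (e.symm i : M) with hv
  have hrange : Set.range v = (T : Set M) := by
    rw [hv]
    ext x
    constructor
    · rintro ⟨i, rfl⟩; exact (e.symm i).2
    · intro hx; exact ⟨e ⟨x, hx⟩, by simp⟩
  set π : (Fin n → ℤ) →ₗ[ℤ] M := Fintype.linearCombination ℤ v with hπ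
  have hrangeπ : LinearMap.range π = Submodule.span ℤ (T : Set M) := by
    rw [hπ, Fintype.range_linearCombination, hrange]
  set H' : Submodule ℤ M := AddSubgroup.toIntSubmodule H with hH'
  have hle : H' ≤ LinearMap.range π := by
    rw [hrangeπ]
    intro x hx
    have := hH hx
    rwa [← Submodule.span_int_eq_addSubgroupClosure] at this
  set P : Submodule ℤ (Fin n → ℤ) := H'.comap π with hP
  have hmap : P.map π = H' := by
    rw [hP, Submodule.map_comap_eq, inf_eq_right.mpr hle]
  obtain ⟨m, b⟩ := Submodule.basisOfPid (Pi.basisFun ℤ (Fin n)) P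
  have hm : m ≤ n := by
    simpa using (Pi.basisFun ℤ (Fin n)).card_le_card_of_submodule P b
  -- generators of H'
  set w : Fin m → M := fun i => π (P.subtype (b i)) with hw
  have hspanP : Submodule.span ℤ (Set.range (P.subtype ∘ b)) = P := by
    rw [Set.range_comp, ← Submodule.map_span, b.span_eq, Submodule.map_top,
      Submodule.range_subtype]
  have hspan : Submodule.span ℤ (Set.range w) = H' := by
    have : Set.range w = π '' Set.range (P.subtype ∘ b) := by
      rw [← Set.range_comp]; rfl
    rw [this, ← Submodule.map_span, hspanP, hmap]
  refine ⟨Finset.image w Finset.univ, ?_, ?_⟩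
  · exact le_trans Finset.card_image_le (by simpa using hm)
  · have hcoe : ((Finset.image w Finset.univ : Finset M) : Set M) = Set.range w := by
      simp
    rw [hcoe, ← Submodule.span_int_eq_addSubgroupClosure, hspan, hH']
    have := AddSubgroup.toIntSubmodule.symm_apply_apply H
    rwa [AddSubgroup.toIntSubmodule_symm] at this

lemma closure_toAddSubgroup {K : Type*} [Group K] (S : Set K) :
    Subgroup.toAddSubgroup (Subgroup.closure S) =
      AddSubgroup.closure (Additive.toMul ⁻¹' S) := by
  apply le_antisymm
  · have h : AddSubgroup.closure (Additive.toMul ⁻¹' S) =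
        Subgroup.toAddSubgroup (Subgroup.toAddSubgroup.symm
          (AddSubgroup.closure (Additive.toMul ⁻¹' S))) :=
      (Subgroup.toAddSubgroup.apply_symm_apply _).symm
    rw [h, Subgroup.toAddSubgroup.le_iff_le, Subgroup.closure_le]
    intro s hs
    show Additive.ofMul s ∈ AddSubgroup.closure (Additive.toMul ⁻¹' S)
    exact AddSubgroup.subset_closure hs
  · rw [AddSubgroup.closure_le]
    intro x hx
    show Additive.toMul x ∈ Subgroup.closure S
    exact Subgroup.subset_closure hx

lemma lemA {K : Type*} [CommGroup K] (T : Finset K) (H : Subgroup K)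
    (hH : H ≤ Subgroup.closure (T : Set K)) :
    ∃ S : Finset K, S.card ≤ T.card ∧ Subgroup.closure (S : Set K) = H := by
  classical
  have himg : ((T.image Additive.ofMul : Finset (Additive K)) : Set (Additive K))
      = Additive.toMul ⁻¹' (T : Set K) := by
    rw [Finset.coe_image, Equiv.image_eq_preimage_symm]
    rfl
  obtain ⟨S, hc, he⟩ := lemA_add (M := Additive K) (T.image Additive.ofMul)
    (Subgroup.toAddSubgroup H) (by
      rw [himg, ← closure_toAddSubgroup]
      exact Subgroup.toAddSubgroup.le_iff_le.mpr hH)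
  refine ⟨S.image Additive.toMul, ?_, ?_⟩
  · calc (S.image Additive.toMul).card ≤ S.card := Finset.card_image_le
      _ ≤ (T.image Additive.ofMul).card := hc
      _ ≤ T.card := Finset.card_image_le
  · apply Subgroup.toAddSubgroup.injective
    rw [closure_toAddSubgroup]
    have : (Additive.toMul ⁻¹' ((S.image Additive.toMul : Finset K) : Set K))
        = (S : Set (Additive K)) := by
      rw [Finset.coe_image]
      ext x
      simp
    rw [this, he]



lemma lemB {K L : Type*} [Group K] [Group L] {f : K →* L} {r : ℕ}
    (hK : HasRankLE K r) (F : Subgroup L) (hle : F ≤ f.range) (hF : F.FG) :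
    ∃ S : Finset L, S.card ≤ r ∧ Subgroup.closure (S : Set L) = F := by
  classical
  obtain ⟨T, hT⟩ := hF
  have hmem : ∀ t : T, (t : L) ∈ f.range := fun t =>
    hle (hT ▸ Subgroup.subset_closure t.2)
  choose u hu using hmem
  have hUfg : (Subgroup.closure (Set.range u)).FG :=
    (Subgroup.fg_iff _).mpr ⟨Set.range u, rfl, Set.finite_range u⟩
  obtain ⟨S', hc, he⟩ := hK _ hUfg
  refine ⟨S'.image f, le_trans Finset.card_image_le hc, ?_⟩
  have h1 : Subgroup.closure ((S'.image f : Finset L) : Set L) =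
      (Subgroup.closure (S' : Set K)).map f := by
    rw [MonoidHom.map_closure, Finset.coe_image]
  rw [h1, he, MonoidHom.map_closure]
  have : f '' Set.range u = (T : Set L) := by
    ext y
    constructor
    · rintro ⟨_, ⟨t, rfl⟩, rfl⟩; rw [hu t]; exact t.2
    · intro hy; exact ⟨u ⟨y, hy⟩, ⟨⟨y, hy⟩, rfl⟩, hu _⟩
  rw [this, hT]

lemma mem_finsetSup_prod {C : Type*} [CommGroup C] {ι : Type*} [DecidableEq ι]
    (s : Finset ι) (D : ι → Subgroup C) (y : C) (h : y ∈ ⨆ i ∈ s, D i) :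
    ∃ d : ι → C, (∀ i ∈ s, d i ∈ D i) ∧ y = ∏ i ∈ s, d i := by
  classical
  induction s using Finset.induction_on generalizing y with
  | empty =>
    simp only [Finset.notMem_empty, iSup_false, iSup_bot, Subgroup.mem_bot] at h
    exact ⟨fun _ => 1, by simp, by simp [h]⟩
  | @insert a s ha ih =>
    rw [Finset.iSup_insert] at h
    obtain ⟨z, hz, w, hw, rfl⟩ := Subgroup.mem_sup.mp h
    obtain ⟨d, hd, rfl⟩ := ih w hw
    refine ⟨Function.update d a z, ?_, ?_⟩
    · intro i hi
      rcases Finset.mem_insert.mp hi with h' | hi2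
      · subst h'; simpa using hz
      · rw [Function.update_of_ne (by rintro rfl; exact ha hi2)]
        exact hd i hi2
    · rw [Finset.prod_insert ha, Function.update_self]
      congr 1
      exact (Finset.prod_congr rfl fun i hi => by
        rw [Function.update_of_ne (by rintro rfl; exact ha hi)]).symm



section CommHom
variable {G : Type*} [Group G] (N : Subgroup G) [N.Normal] [IsMulCommutative N]

omit [N.Normal] in
lemma comm_of_memN {a b : G} (ha : a ∈ N) (hb : b ∈ N) : a * b = b * a :=
  congrArg Subtype.val (mul_comm' (⟨a, ha⟩ : N) (⟨b, hb⟩ : N))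

omit [IsMulCommutative N] in
lemma commutator_memN (x : G) (n : ↥N) : ⁅(n : G), x⁆ ∈ N := by
  have h : ⁅(n : G), x⁆ = (n : G) * (x * (n : G)⁻¹ * x⁻¹) := by group
  rw [h]
  exact N.mul_mem n.2 (‹N.Normal›.conj_mem _ (N.inv_mem n.2) x)

/-- The homomorphism `n ↦ ⁅n, x⁆` from an abelian normal subgroup to itself. -/
def commHom (x : G) : ↥N →* ↥N where
  toFun n := ⟨⁅(n : G), x⁆, commutator_memN N x n⟩
  map_one' := by
    ext
    show ⁅(1 : G), x⁆ = 1
    group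
  map_mul' n m := by
    ext
    show ⁅((n : G) * (m : G)), x⁆ = ⁅(n : G), x⁆ * ⁅(m : G), x⁆
    calc ⁅((n : G) * (m : G)), x⁆
        = (n : G) * ⁅(m : G), x⁆ * (n : G)⁻¹ * ⁅(n : G), x⁆ := by group
      _ = ⁅(m : G), x⁆ * (n : G) * (n : G)⁻¹ * ⁅(n : G), x⁆ := by
          rw [comm_of_memN N n.2 (commutator_memN N x m)]
      _ = ⁅(m : G), x⁆ * ⁅(n : G), x⁆ := by group
      _ = ⁅(n : G), x⁆ * ⁅(m : G), x⁆ :=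
          comm_of_memN N (commutator_memN N x m) (commutator_memN N x n)

lemma commHom_eq_one_of_centralizer (x : G) (c : ↥N)
    (hc : c ∈ (Subgroup.centralizer {x}).subgroupOf N) : commHom N x c = 1 := by
  ext
  show ⁅(c : G), x⁆ = 1
  rw [commutatorElement_eq_one_iff_mul_comm]
  exact Subgroup.mem_centralizer_singleton_iff.mp (Subgroup.mem_subgroupOf.mp hc)

end CommHom

/-- Let `G` be a finitely generated group with a normal abelian subgroup
`N` such that `G/N` can be generated by `r` elements and `N/C_N(x)` has rank at most
`r` for every `x ∈ G`. Then `[N,G]` has rank at most `r²`. -/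
theorem rank_commutator_le_sq_of_fg
    (G : Type*) [Group G] [Group.FG G]
    (N : Subgroup G) [N.Normal] [IsMulCommutative N] (r : ℕ)
    (hquot : ∃ S : Finset (G ⧸ N), S.card ≤ r ∧ Subgroup.closure (S : Set (G ⧸ N)) = ⊤)
    (hcent : ∀ x : G,
      HasRankLE (N ⧸ (Subgroup.centralizer {x}).subgroupOf N) r) :
    HasRankLE (⁅N, (⊤ : Subgroup G)⁆ : Subgroup G) (r ^ 2) := by
  classical
  letI : CommGroup ↥N := { (inferInstance : Group ↥N) with mul_comm := mul_comm' }
  set A : Subgroup G := ⁅N, (⊤ : Subgroup G)⁆ with hA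
  intro H hFG
  have hAN : A ≤ N := Subgroup.commutator_le_left N ⊤
  obtain ⟨S_Q, hSQcard, hSQtop⟩ := hquot
  set k := S_Q.card with hk
  set q : Fin k → G ⧸ N := fun i => (S_Q.equivFin.symm i : G ⧸ N) with hq
  have hqrange : Set.range q = (S_Q : Set (G ⧸ N)) := by
    ext z
    constructor
    · rintro ⟨i, rfl⟩; exact (S_Q.equivFin.symm i).2
    · intro hz; exact ⟨S_Q.equivFin ⟨z, hz⟩, by simp [hq]⟩
  have hlift : ∀ i, ∃ g : G, (g : G ⧸ N) = q i := fun i =>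
    QuotientGroup.mk_surjective (q i)
  choose x hx using hlift
  set φ : Fin k → (↥N →* ↥N) := fun i => commHom N (x i) with hφ
  set D : Fin k → Subgroup ↥N := fun i => (φ i).range with hD
  set J : Subgroup ↥N := ⨆ i, D i with hJ
  set JG : Subgroup G := J.map N.subtype with hJG
  have hJG_le_N : JG ≤ N := by
    rintro y ⟨d, _, rfl⟩
    exact d.2
  have hJG_le_A : JG ≤ A := by
    rw [hJG, Subgroup.map_iSup]
    refine iSup_le fun i => ?_
    rintro y ⟨d, ⟨n, rfl⟩, rfl⟩
    exact Subgroup.commutator_mem_commutator n.2 (Subgroup.mem_top _)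
  -- the subgroup of elements g with ⁅n, g⁆ ∈ JG for all n ∈ N
  set P : Subgroup G :=
    { carrier := {g : G | ∀ n : G, n ∈ N → ⁅n, g⁆ ∈ JG}
      one_mem' := by
        intro n hn
        have : ⁅n, (1 : G)⁆ = 1 := by group
        rw [this]; exact JG.one_mem
      mul_mem' := by
        intro g h hg hh n hn
        have h1 : ⁅n, g * h⁆ = ⁅n, g⁆ * (⁅⁅n, h⁆, g⁆⁻¹ * ⁅n, h⁆) := by group
        rw [h1]
        exact JG.mul_mem (hg n hn)
          (JG.mul_mem (JG.inv_mem (hg _ (hJG_le_N (hh n hn)))) (hh n hn))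
      inv_mem' := by
        intro g hg n hn
        have h1 : ⁅n, g⁻¹⁆ = ⁅g⁻¹ * n * g, g⁆⁻¹ := by group
        rw [h1]
        refine JG.inv_mem (hg _ ?_)
        have := ‹N.Normal›.conj_mem n hn g⁻¹
        simpa using this } with hP
  have hNP : N ≤ P := by
    intro m hm
    intro n hn
    have : ⁅n, m⁆ = 1 := commutatorElement_eq_one_iff_mul_comm.mpr (comm_of_memN N hn hm)
    rw [this]; exact JG.one_mem
  have hxP : ∀ i, x i ∈ P := by
    intro i n hn
    have heq : ⁅n, x i⁆ = N.subtype ((φ i) ⟨n, hn⟩) := rfl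
    rw [heq]
    exact Subgroup.mem_map_of_mem _ ((le_iSup D i) ⟨⟨n, hn⟩, rfl⟩)
  have hPtop : ∀ g : G, g ∈ P := by
    intro g
    have hq1 : (g : G ⧸ N) ∈ Subgroup.closure (S_Q : Set (G ⧸ N)) := by
      rw [hSQtop]; exact Subgroup.mem_top _
    have himg : (S_Q : Set (G ⧸ N)) = (QuotientGroup.mk' N) '' (Set.range x) := by
      rw [← hqrange]
      ext z
      simp only [Set.mem_image, Set.mem_range]
      constructor
      · rintro ⟨i, rfl⟩; exact ⟨x i, ⟨i, rfl⟩, hx i⟩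
      · rintro ⟨_, ⟨i, rfl⟩, rfl⟩; exact ⟨i, (hx i).symm⟩
    rw [himg, ← MonoidHom.map_closure] at hq1
    obtain ⟨y, hy, hyg⟩ := Subgroup.mem_map.mp hq1
    have hyN : y⁻¹ * g ∈ N := by
      rwa [QuotientGroup.mk'_apply, QuotientGroup.eq] at hyg
    have hgP : g = y * (y⁻¹ * g) := by group
    rw [hgP]
    exact P.mul_mem
      ((Subgroup.closure_le P).mpr (by rintro _ ⟨i, rfl⟩; exact hxP i) hy)
      (hNP hyN)
  have hAJG : A = JG := by
    refine le_antisymm ?_ hJG_le_A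
    rw [hA, Subgroup.commutator_le]
    intro n hn g _
    exact hPtop g n hn
  -- identify A.subgroupOf N with J
  have hsub : A.subgroupOf N = J := by
    apply Subgroup.map_injective N.subtype_injective
    rw [Subgroup.subgroupOf_map_subtype, inf_eq_left.mpr hAN, hAJG, hJG]
  set incl : ↥A →* ↥N := Subgroup.inclusion hAN with hincl
  set H_N : Subgroup ↥N := H.map incl with hH_N
  have hH_Nfg : H_N.FG := by
    obtain ⟨T0, hT0⟩ := hFG
    exact ⟨T0.image incl, by rw [Finset.coe_image, ← MonoidHom.map_closure, hT0]⟩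
  have hH_N_le_J : H_N ≤ J := by
    rw [← hsub, ← Subgroup.inclusion_range hAN]
    exact Subgroup.map_le_range incl H
  obtain ⟨T_N, hT_N⟩ := hH_Nfg
  have hTmem : ∀ t : T_N, ∃ d : Fin k → ↥N, (∀ i, d i ∈ D i) ∧ (t : ↥N) = ∏ i, d i := by
    intro t
    have h1 : (t : ↥N) ∈ J := hH_N_le_J (hT_N ▸ Subgroup.subset_closure t.2)
    have h2 : (t : ↥N) ∈ ⨆ i ∈ Finset.univ, D i := by
      have heq : (⨆ i ∈ (Finset.univ : Finset (Fin k)), D i) = ⨆ i, D i := by simp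
      rw [heq]; exact h1
    obtain ⟨d, hd1, hd2⟩ := mem_finsetSup_prod Finset.univ D _ h2
    exact ⟨d, fun i => hd1 i (Finset.mem_univ i), by simpa using hd2⟩
  choose dd hdd1 hdd2 using hTmem
  set F : Fin k → Subgroup ↥N :=
    fun i => Subgroup.closure (Set.range fun t : T_N => dd t i) with hF
  have hFfg : ∀ i, (F i).FG := fun i =>
    (Subgroup.fg_iff _).mpr ⟨_, rfl, Set.finite_range _⟩
  have hFD : ∀ i, F i ≤ D i := fun i =>
    (Subgroup.closure_le _).mpr (by rintro _ ⟨t, rfl⟩; exact hdd1 t i)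
  have hSi : ∀ i, ∃ S : Finset ↥N, S.card ≤ r ∧ Subgroup.closure (S : Set ↥N) = F i := by
    intro i
    refine lemB (f := QuotientGroup.lift _ (φ i) (commHom_eq_one_of_centralizer N (x i)))
      (hcent (x i)) (F i) ?_ (hFfg i)
    refine le_trans (hFD i) ?_
    rintro y ⟨n, rfl⟩
    exact ⟨QuotientGroup.mk n, rfl⟩
  choose S hScard hScl using hSi
  set E : Finset ↥N := Finset.univ.biUnion S with hE
  have hEcard : E.card ≤ r ^ 2 := by
    calc E.card ≤ ∑ i, (S i).card := Finset.card_biUnion_le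
      _ ≤ ∑ _i : Fin k, r := Finset.sum_le_sum fun i _ => hScard i
      _ = k * r := by simp [Finset.sum_const, smul_eq_mul]
      _ ≤ r * r := Nat.mul_le_mul_right r hSQcard
      _ = r ^ 2 := (sq r).symm
  have hH_N_le_E : H_N ≤ Subgroup.closure (E : Set ↥N) := by
    have hEset : (E : Set ↥N) = ⋃ i, ((S i : Set ↥N)) := by
      rw [hE, Finset.coe_biUnion]; simp
    have hEcl : Subgroup.closure (E : Set ↥N) = ⨆ i, F i := by
      rw [hEset, Subgroup.closure_iUnion]
      exact iSup_congr hScl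
    rw [hEcl, ← hT_N, Subgroup.closure_le]
    intro t ht
    have heq : t = ∏ i, dd ⟨t, ht⟩ i := hdd2 ⟨t, ht⟩
    have : t ∈ (⨆ i, F i : Subgroup ↥N) := by
      rw [heq]
      exact Subgroup.prod_mem _ fun i _ =>
        (le_iSup F i) (Subgroup.subset_closure ⟨⟨t, ht⟩, rfl⟩)
    exact this
  obtain ⟨S_N, hS_Ncard, hS_Ncl⟩ := lemA E H_N hH_N_le_E
  have hS_Nmem : ∀ s : S_N, (s : ↥N) ∈ H_N := fun s =>
    hS_Ncl ▸ Subgroup.subset_closure s.2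
  choose a ha1 ha2 using fun s : S_N => Subgroup.mem_map.mp (hS_Nmem s)
  refine ⟨S_N.attach.image a, ?_, ?_⟩
  · calc (S_N.attach.image a).card ≤ S_N.attach.card := Finset.card_image_le
      _ = S_N.card := Finset.card_attach
      _ ≤ E.card := hS_Ncard
      _ ≤ r ^ 2 := hEcard
  · apply Subgroup.map_injective (Subgroup.inclusion_injective hAN)
    rw [MonoidHom.map_closure]
    have himg2 : (incl : ↥A →* ↥N) '' ↑(S_N.attach.image a) = (S_N : Set ↥N) := by
      ext y
      constructor
      · rintro ⟨w, hw, rfl⟩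
        rw [Finset.coe_image] at hw
        obtain ⟨s, -, rfl⟩ := hw
        rw [ha2 s]; exact s.2
      · intro hy
        refine ⟨a ⟨y, hy⟩, ?_, ha2 _⟩
        rw [Finset.coe_image]
        exact ⟨⟨y, hy⟩, Finset.mem_attach _ _, rfl⟩
    rw [himg2, hS_Ncl]
end
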